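/- The statistical distance of the outcome distributions of any measurement is bounded by half the trace distance: let M₁, …, M_m be Hermitian positive semidefinite complex d × d matrices with Σₖ Mₖ = I (a POVM), and let ρ and σ be density matrices. Then (1/2)·Σₖ |tr(Mₖ·ρ) − tr(Mₖ·σ)| ≤ (1/2)·‖ρ − σ‖₁, where each tr(Mₖ·ρ) and tr(Mₖ·σ) is a real number. -/

import Mathlib

open Matrix
open scoped ComplexOrder

/-- The old Mathlib `Matrix.PosSemidef.sqrt` (removed since), with its old definition. -/
noncomputable def posSemidefSqrtOld {d : Type*} [Fintype d] [DecidableEq d] {A : Matrix d d ℂ}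
    (hA : A.PosSemidef) : Matrix d d ℂ :=
  hA.1.eigenvectorUnitary.1 * diagonal ((↑) ∘ (√·) ∘ hA.1.eigenvalues) *
  (star hA.1.eigenvectorUnitary : Matrix d d ℂ)

/-- The trace norm of a complex square matrix: the trace of the positive
semidefinite square root of `Aᴴ * A`. -/
noncomputable def traceNorm {d : Type*} [Fintype d] [DecidableEq d] (A : Matrix d d ℂ) : ℝ :=
  ((posSemidefSqrtOld (Matrix.posSemidef_conjTranspose_mul_self A)).trace).re

/-- A density matrix: positive semidefinite (hence Hermitian) with trace 1. -/
def IsDensity {d : Type*} [Fintype d] (ρ : Matrix d d ℂ) : Prop :=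
  ρ.PosSemidef ∧ ρ.trace = 1

/-- The statistical distance of the outcome distributions of a POVM measurement
is bounded by half the trace distance. -/
theorem povm_statistical_distance_le {d : Type*} [Fintype d] [DecidableEq d] {m : ℕ}
    (M : Fin m → Matrix d d ℂ) (hM : ∀ k, (M k).PosSemidef)
    (hsum : ∑ k, M k = 1)
    (ρ σ : Matrix d d ℂ) (hρ : IsDensity ρ) (hσ : IsDensity σ) :
    (1 / 2) * ∑ k, |((M k * ρ).trace).re - ((M k * σ).trace).re| ≤
      (1 / 2) * traceNorm (ρ - σ) := by
  obtain ⟨hρp, -⟩ := hρ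
  obtain ⟨hσp, -⟩ := hσ
  set Δ : Matrix d d ℂ := ρ - σ with hΔdef
  have hΔ : Δ.IsHermitian := hρp.1.sub hσp.1
  set U : Matrix d d ℂ := (hΔ.eigenvectorUnitary : Matrix d d ℂ) with hUdef
  set lam : d → ℝ := hΔ.eigenvalues with hlamdef
  have hUU : star U * U = 1 := Unitary.coe_star_mul_self _
  have hspec : Δ = U * diagonal (RCLike.ofReal ∘ lam) * star U := hΔ.spectral_theorem
  have key : ∀ f g : d → ℂ, (U * diagonal f * star U) * (U * diagonal g * star U)
      = U * (diagonal f * diagonal g) * star U := by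
    intro f g
    simp only [Matrix.mul_assoc]
    rw [← Matrix.mul_assoc (star U) U (diagonal g * star U), hUU, Matrix.one_mul,
      ← Matrix.mul_assoc (diagonal f) (diagonal g)]
  set S : Matrix d d ℂ := U * diagonal (fun i => ((|lam i| : ℝ) : ℂ)) * star U with hSdef
  have hSpsd : S.PosSemidef := by
    refine PosSemidef.mul_mul_conjTranspose_same ?_ U
    refine posSemidef_diagonal_iff.mpr fun i => ?_
    exact_mod_cast Complex.zero_le_real.mpr (abs_nonneg _)
  have hSsq : S ^ 2 = Δᴴ * Δ := by
    rw [hΔ.eq, pow_two, hSdef]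
    conv_rhs => rw [hspec]
    rw [key, key, Matrix.diagonal_mul_diagonal, Matrix.diagonal_mul_diagonal]
    congr 2
    funext i
    simp only [Pi.mul_apply, Function.comp_apply]
    norm_cast
    simp [abs_mul_abs_self]
  have hsqrt : posSemidefSqrtOld (posSemidef_conjTranspose_mul_self Δ) = S := by
    have h1 : posSemidefSqrtOld (posSemidef_conjTranspose_mul_self Δ)
        = cfc Real.sqrt (Δᴴ * Δ) := by
      rw [(posSemidef_conjTranspose_mul_self Δ).1.cfc_eq, IsHermitian.cfc, posSemidefSqrtOld,
        Unitary.conjStarAlgAut_apply]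
      rfl
    have h2 : Δᴴ * Δ = cfc (fun x : ℝ => x ^ 2) Δ := by
      rw [hΔ.eq, ← pow_two, cfc_pow_id (R := ℝ) Δ 2 hΔ.isSelfAdjoint]
    rw [h1, h2, ← cfc_comp Real.sqrt (fun x : ℝ => x ^ 2) Δ hΔ.isSelfAdjoint, hΔ.cfc_eq,
      IsHermitian.cfc, Unitary.conjStarAlgAut_apply]
    show _ = U * diagonal (fun i => ((|lam i| : ℝ) : ℂ)) * star U
    congr 2
    congr 1
    funext i
    simp [Real.sqrt_sq_eq_abs, hlamdef]
  have htn : traceNorm Δ = ∑ i, |lam i| := by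
    rw [traceNorm, hsqrt, hSdef, trace_mul_cycle, hUU, Matrix.one_mul]
    simp [Matrix.trace, Matrix.diag, Complex.re_sum]
  set N : Fin m → Matrix d d ℂ := fun k => star U * M k * U with hNdef
  have hNpsd : ∀ k, (N k).PosSemidef := fun k => (hM k).conjTranspose_mul_mul_same U
  set c : Fin m → d → ℝ := fun k i => ((N k) i i).re with hcdef
  have hc0 : ∀ k i, 0 ≤ c k i := by
    intro k i
    have := (hNpsd k).re_dotProduct_nonneg (Pi.single i 1)
    simpa [dotProduct, mulVec, Pi.single_apply, Finset.sum_ite_eq, Finset.sum_ite_eq',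
      Finset.mul_sum] using this
  have hcsum : ∀ i, ∑ k, c k i = 1 := by
    intro i
    have hNs : ∑ k, N k = 1 := by
      simp only [hNdef]
      rw [← Finset.sum_mul, ← Finset.mul_sum, hsum, Matrix.mul_one, hUU]
    have h2 := congrArg (fun A : Matrix d d ℂ => (A i i).re) hNs
    simpa [hcdef, Matrix.sum_apply, Matrix.one_apply, Complex.re_sum] using h2
  have htr : ∀ k, ((M k * ρ).trace).re - ((M k * σ).trace).re = ∑ i, c k i * lam i := by
    intro k
    have h1 : (M k * ρ).trace - (M k * σ).trace = (M k * Δ).trace := by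
      rw [hΔdef, Matrix.mul_sub, trace_sub]
    have h2 : (M k * Δ).trace = (N k * diagonal (RCLike.ofReal ∘ lam)).trace := by
      rw [hspec, ← Matrix.mul_assoc, ← Matrix.mul_assoc,
        trace_mul_cycle (M k * U) (diagonal (RCLike.ofReal ∘ lam)) (star U),
        hNdef, ← Matrix.mul_assoc]
    have h3 : ((M k * Δ).trace).re = ∑ i, c k i * lam i := by
      rw [h2]
      simp only [Matrix.trace, Matrix.diag, Matrix.mul_diagonal, Function.comp_apply]
      rw [Complex.re_sum]
      refine Finset.sum_congr rfl fun i _ => ?_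
      simp [hcdef, Complex.mul_re]
    rw [← h3, ← Complex.sub_re, h1]
  calc (1 / 2) * ∑ k, |((M k * ρ).trace).re - ((M k * σ).trace).re|
      = (1 / 2) * ∑ k, |∑ i, c k i * lam i| := by
        congr 1; exact Finset.sum_congr rfl fun k _ => by rw [htr]
    _ ≤ (1 / 2) * ∑ k, ∑ i, c k i * |lam i| := by
        refine mul_le_mul_of_nonneg_left ?_ (by norm_num)
        refine Finset.sum_le_sum fun k _ => ?_
        calc |∑ i, c k i * lam i| ≤ ∑ i, |c k i * lam i| := Finset.abs_sum_le_sum_abs _ _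
          _ = ∑ i, c k i * |lam i| := Finset.sum_congr rfl fun i _ => by
              rw [abs_mul, abs_of_nonneg (hc0 k i)]
    _ = (1 / 2) * ∑ i, |lam i| := by
        rw [Finset.sum_comm]
        congr 1
        refine Finset.sum_congr rfl fun i _ => ?_
        rw [← Finset.sum_mul, hcsum, one_mul]
    _ = (1 / 2) * traceNorm Δ := by rw [htn]
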